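/- Consider a coloring model on n vertices in which the color space of each vertex v is an arbitrary probability space (Ω_v, Pr_v) (possibly infinite) and each edge function f_{uv} : Ω_u × Ω_v → {0,1} is measurable, and let 𝒟 be its induced probability distribution on simple graphs with vertex set {1,...,n}. Then there exists a coloring model on n vertices in which each vertex's color space is finite with at most 2^{n(n−1)/2} + 1 colors, whose induced distribution on graphs is also 𝒟. -/

import Mathlib

open scoped Classical

structure ColoringModel (n : ℕ) where
  Ω : Fin n → Type
  fin : ∀ v, Fintype (Ω v)
  p : ∀ v, Ω v → ℝ
  nonneg : ∀ v ω, 0 ≤ p v ω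
  sum_one : ∀ v, ∑ ω ∈ @Finset.univ (Ω v) (fin v), p v ω = 1
  f : ∀ u v : Fin n, Ω u → Ω v → Bool
  symm : ∀ u v x y, f u v x y = f v u y x

def ColoringModel.graph {n : ℕ} (M : ColoringModel n) (ω : ∀ v, M.Ω v) :
    SimpleGraph (Fin n) where
  Adj u v := u ≠ v ∧ M.f u v (ω u) (ω v) = true
  symm := ⟨by
    rintro u v ⟨h1, h2⟩
    refine ⟨h1.symm, ?_⟩
    rw [M.symm]
    exact h2⟩
  loopless := ⟨fun u h => h.1 rfl⟩

noncomputable def ColoringModel.pr {n : ℕ} (M : ColoringModel n)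
    (P : SimpleGraph (Fin n) → Prop) : ℝ :=
  letI := M.fin
  ∑ ω : (∀ v, M.Ω v), if P (M.graph ω) then ∏ v, M.p v (ω v) else 0

noncomputable def ColoringModel.dist {n : ℕ} (M : ColoringModel n)
    (G : SimpleGraph (Fin n)) : ℝ :=
  M.pr (fun H => H = G)

structure MColoringModel (n : ℕ) where
  Ω : Fin n → Type
  meas : ∀ v, MeasurableSpace (Ω v)
  μ : ∀ v, @MeasureTheory.Measure (Ω v) (meas v)
  prob : ∀ v, @MeasureTheory.IsProbabilityMeasure (Ω v) (meas v) (μ v)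
  f : ∀ u v : Fin n, Ω u → Ω v → Bool
  symm : ∀ u v x y, f u v x y = f v u y x
  f_meas : ∀ u v : Fin n,
    @Measurable (Ω u × Ω v) Bool (@Prod.instMeasurableSpace _ _ (meas u) (meas v)) _
      (fun q => f u v q.1 q.2)

def MColoringModel.graph {n : ℕ} (M : MColoringModel n) (ω : ∀ v, M.Ω v) :
    SimpleGraph (Fin n) where
  Adj u v := u ≠ v ∧ M.f u v (ω u) (ω v) = true
  symm := ⟨by
    rintro u v ⟨h1, h2⟩
    refine ⟨h1.symm, ?_⟩
    rw [M.symm]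
    exact h2⟩
  loopless := ⟨fun u h => h.1 rfl⟩

noncomputable def MColoringModel.dist {n : ℕ} (M : MColoringModel n)
    (G : SimpleGraph (Fin n)) : ℝ :=
  letI := M.meas
  haveI := M.prob
  (MeasureTheory.Measure.pi M.μ {ω | M.graph ω = G}).toReal

open MeasureTheory Module Set

section Barycenter


variable {E : Type} [NormedAddCommGroup E] [InnerProductSpace ℝ E]
  [FiniteDimensional ℝ E] [MeasurableSpace E] [BorelSpace E]
  [SecondCountableTopology E]

local notation "⟪" x ", " y "⟫" => @inner ℝ _ _ x y

lemma integrable_of_bdd {α : Type} [MeasurableSpace α] {μ : Measure α}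
    [IsProbabilityMeasure μ] {D : α → E} (hD : Measurable D) {R : ℝ}
    (hbd : ∀ a, ‖D a‖ ≤ R) : Integrable D μ :=
  ⟨hD.stronglyMeasurable.aestronglyMeasurable,
    MeasureTheory.HasFiniteIntegral.of_bounded (ae_of_all _ hbd)⟩

theorem aux_bary (d : ℕ) : ∀ {α : Type} [MeasurableSpace α] (μ : Measure α)
    [IsProbabilityMeasure μ] (D : α → E), Measurable D → ∀ (R : ℝ), (∀ a, ‖D a‖ ≤ R) →
    finrank ℝ (Submodule.span ℝ (Set.range (fun a => D a - ∫ a, D a ∂μ))) ≤ d →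
    (∫ a, D a ∂μ) ∈ convexHull ℝ (Set.range D) := by
  induction d with
  | zero =>
    intro α mα μ hμ D hD R hbd hrank
    haveI : Nonempty α := by
      by_contra h
      rw [not_nonempty_iff] at h
      have h1 : μ Set.univ = 1 := measure_univ
      rw [Set.univ_eq_empty_iff.mpr h, measure_empty] at h1
      exact zero_ne_one h1
    obtain ⟨a₀⟩ := (inferInstance : Nonempty α)
    have hV : Submodule.span ℝ (Set.range (fun a => D a - ∫ a, D a ∂μ)) = ⊥ :=
      Submodule.finrank_eq_zero.mp (Nat.le_zero.mp hrank)
    have h0 : D a₀ - ∫ a, D a ∂μ = 0 := by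
      have h1 : D a₀ - ∫ a, D a ∂μ ∈ (⊥ : Submodule ℝ E) := by
        rw [← hV]
        exact Submodule.subset_span (Set.mem_range_self a₀)
      simpa using h1
    rw [← sub_eq_zero.mp h0]
    exact subset_convexHull ℝ _ (Set.mem_range_self a₀)
  | succ d ih =>
    intro α mα μ hμ D hD R hbd hrank
    haveI : Nonempty α := by
      by_contra h
      rw [not_nonempty_iff] at h
      have h1 : μ Set.univ = 1 := measure_univ
      rw [Set.univ_eq_empty_iff.mpr h, measure_empty] at h1
      exact zero_ne_one h1
    by_contra hb
    set b := ∫ a, D a ∂μ with hbdef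
    set C := convexHull ℝ (Set.range D) with hCdef
    set V := Submodule.span ℝ (Set.range (fun a => D a - b)) with hVdef
    have hDaV : ∀ a, D a - b ∈ V := fun a =>
      Submodule.subset_span (Set.mem_range_self a)
    have hVne : V ≠ ⊥ := by
      intro hV
      apply hb
      obtain ⟨a₀⟩ := (inferInstance : Nonempty α)
      have h0 := hDaV a₀
      rw [hV, Submodule.mem_bot] at h0
      rw [← sub_eq_zero.mp h0]
      exact subset_convexHull ℝ _ (Set.mem_range_self a₀)
    have hIntD : Integrable D μ := integrable_of_bdd hD hbd
    -- find a supporting functional u via compactness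
    have hsep : ∃ u : E, (‖u‖ = 1 ∧ u ∈ V) ∧ ∀ a : α, ⟪u, b⟫ ≤ ⟪u, D a⟫ := by
      have hcpt : IsCompact (Metric.sphere (0 : E) 1 ∩ (V : Set E)) :=
        (isCompact_sphere (0 : E) 1).inter_right V.closed_of_finiteDimensional
      have hcl : ∀ a : α, IsClosed {y : E | ⟪y, b⟫ ≤ ⟪y, D a⟫} := by
        intro a
        exact isClosed_le (Continuous.inner continuous_id continuous_const)
          (Continuous.inner continuous_id continuous_const)
      have hFIP : ∀ F : Finset α,
          (Metric.sphere (0 : E) 1 ∩ (V : Set E) ∩ ⋂ a ∈ F, {y : E | ⟪y, b⟫ ≤ ⟪y, D a⟫}).Nonempty := by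
        intro F
        rcases F.eq_empty_or_nonempty with hF | hF
        · obtain ⟨v, hvV, hv0⟩ := V.ne_bot_iff.mp hVne
          refine ⟨‖v‖⁻¹ • v, ⟨?_, V.smul_mem _ hvV⟩, by simp [hF]⟩
          rw [mem_sphere_zero_iff_norm, norm_smul, norm_inv, norm_norm,
            inv_mul_cancel₀ (norm_ne_zero_iff.mpr hv0)]
        · set T : Finset E := F.image D with hT
          have hTC : (convexHull ℝ (T : Set E)) ⊆ C := by
            apply convexHull_mono
            rw [hT, Finset.coe_image]
            exact Set.image_subset_range D F
          have hbT : b ∉ convexHull ℝ (T : Set E) := fun h => hb (hTC h)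
          obtain ⟨f, r, hfb, hfT⟩ := geometric_hahn_banach_point_closed
            (convex_convexHull ℝ _) (T.finite_toSet.isClosed_convexHull ℝ) hbT
          set wv : E := (InnerProductSpace.toDual ℝ E).symm f with hwv
          have hwv_apply : ∀ y : E, ⟪wv, y⟫ = f y := fun y =>
            InnerProductSpace.toDual_symm_apply
          set w' : E := (Submodule.orthogonalProjection V wv : E) with hw'
          have hw'V : (w' : E) ∈ V := by rw [hw']; exact (Submodule.orthogonalProjection V wv).2
          have hinner : ∀ a ∈ F, 0 < ⟪w', D a - b⟫ := by
            intro a haF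
            have hperp : wv - w' ∈ Vᗮ := Submodule.sub_starProjection_mem_orthogonal (K := V) wv
            have h0 : ⟪D a - b, wv - w'⟫ = 0 :=
              (Submodule.mem_orthogonal V (wv - w')).mp hperp _ (hDaV a)
            have h1 : ⟪wv - w', D a - b⟫ = 0 := by rw [real_inner_comm]; exact h0
            have h2 : ⟪w', D a - b⟫ = ⟪wv, D a - b⟫ := by
              have := inner_sub_left (𝕜 := ℝ) wv w' (D a - b)
              rw [h1] at this
              linarith
            rw [h2, inner_sub_right, hwv_apply, hwv_apply]
            have hDa : f (D a) > r := hfT _ (subset_convexHull ℝ _ (by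
              rw [hT]; exact Finset.mem_coe.mpr (Finset.mem_image_of_mem D haF)))
            linarith
          have hw'0 : w' ≠ 0 := by
            obtain ⟨a₀, ha₀⟩ := hF
            intro h
            have := hinner a₀ ha₀
            rw [h, inner_zero_left] at this
            exact lt_irrefl 0 this
          refine ⟨‖w'‖⁻¹ • w', ⟨?_, V.smul_mem _ hw'V⟩, ?_⟩
          · rw [mem_sphere_zero_iff_norm, norm_smul, norm_inv, norm_norm,
              inv_mul_cancel₀ (norm_ne_zero_iff.mpr hw'0)]
          · rw [Set.mem_iInter₂]
            intro a haF
            have h1 : (0:ℝ) ≤ ⟪‖w'‖⁻¹ • w', D a - b⟫ := by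
              rw [real_inner_smul_left]
              exact mul_nonneg (inv_nonneg.mpr (norm_nonneg _)) (hinner a haF).le
            rw [inner_sub_right] at h1
            simpa using sub_nonneg.mp (by linarith)
      obtain ⟨u, hu⟩ := hcpt.inter_iInter_nonempty _ hcl hFIP
      rw [Set.mem_inter_iff, Set.mem_iInter] at hu
      exact ⟨u, ⟨mem_sphere_zero_iff_norm.mp hu.1.1, hu.1.2⟩, fun a => hu.2 a⟩
    obtain ⟨u, ⟨hu_norm, hu_V⟩, hu_le⟩ := hsep
    -- show a.e. equality ⟪u, D a⟫ = ⟪u, b⟫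
    set g : α → ℝ := fun a => ⟪u, D a⟫ - ⟪u, b⟫ with hg
    have hg_nonneg : ∀ a, 0 ≤ g a := fun a => sub_nonneg.mpr (hu_le a)
    have hg_int : Integrable g μ := (hIntD.const_inner u).sub (integrable_const _)
    have hg_integral : ∫ a, g a ∂μ = 0 := by
      rw [integral_sub (hIntD.const_inner u) (integrable_const _),
        integral_inner hIntD u, integral_const]
      simp [hbdef]
    have hg_ae : g =ᵐ[μ] 0 :=
      (integral_eq_zero_iff_of_nonneg hg_nonneg hg_int).mp hg_integral
    set A : Set α := {a : α | ⟪u, D a⟫ = ⟪u, b⟫} with hA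
    have hA_meas : MeasurableSet A := by
      apply measurableSet_eq_fun
      · exact ((Continuous.inner continuous_const continuous_id).measurable).comp hD
      · exact measurable_const
    have hAc : μ Aᶜ = 0 := by
      have h1 : μ {a | g a ≠ 0} = 0 := by
        have := hg_ae
        rw [Filter.eventuallyEq_iff_exists_mem] at this
        exact ae_iff.mp hg_ae
      have h2 : Aᶜ ⊆ {a | g a ≠ 0} := by
        intro a ha
        simp only [hA, Set.mem_compl_iff, Set.mem_setOf_eq] at ha ⊢
        rw [hg]
        intro hcon
        exact ha (by linarith [sub_eq_zero.mp hcon])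
      exact measure_mono_null h2 h1
    have hA1 : μ A = 1 := by
      have h2 := measure_add_measure_compl hA_meas (μ := μ)
      rw [hAc, add_zero, measure_univ] at h2
      exact h2
    -- restrict to A
    set μ' : Measure A := μ.comap Subtype.val with hμ'
    have hce : MeasurableEmbedding (Subtype.val : A → α) :=
      MeasurableEmbedding.subtype_coe hA_meas
    haveI : IsProbabilityMeasure μ' := by
      constructor
      rw [hμ', hce.comap_apply, Set.image_univ, Subtype.range_coe]
      exact hA1
    set D' : A → E := fun a => D a.val with hD'
    have hD'_meas : Measurable D' := hD.comp measurable_subtype_coe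
    have hmap : μ'.map Subtype.val = μ := by
      rw [hμ', map_comap_subtype_coe hA_meas]
      rw [Measure.restrict_congr_set (ae_eq_univ.mpr hAc), Measure.restrict_univ]
    have hb' : ∫ a, D' a ∂μ' = b := by
      rw [hbdef, ← hmap, hce.integral_map]
    -- rank decreases
    have hspan_le : Submodule.span ℝ (Set.range (fun a : A => D' a - ∫ a, D' a ∂μ'))
        ≤ V ⊓ (ℝ ∙ u)ᗮ := by
      rw [hb', Submodule.span_le]
      rintro _ ⟨a, rfl⟩
      show D' a - b ∈ V ⊓ (ℝ ∙ u)ᗮ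
      constructor
      · exact hDaV a.val
      · refine (Submodule.mem_orthogonal _ _).mpr ?_
        intro y hy
        obtain ⟨c, rfl⟩ := Submodule.mem_span_singleton.mp hy
        rw [real_inner_smul_left]
        have : ⟪u, D' a - b⟫ = 0 := by
          rw [inner_sub_right, sub_eq_zero]
          exact a.2
        rw [this, mul_zero]
    have hlt : V ⊓ (ℝ ∙ u)ᗮ < V := by
      refine lt_of_le_of_ne inf_le_left ?_
      intro h
      have huV' : u ∈ V ⊓ (ℝ ∙ u)ᗮ := h.symm ▸ hu_V
      have h0 : ⟪u, u⟫ = 0 :=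
        (Submodule.mem_orthogonal _ u).mp huV'.2 u (Submodule.mem_span_singleton_self u)
      have h1 : u = 0 := inner_self_eq_zero.mp h0
      rw [h1, norm_zero] at hu_norm
      norm_num at hu_norm
    have hrank' : finrank ℝ (Submodule.span ℝ (Set.range (fun a : A => D' a - ∫ a, D' a ∂μ'))) ≤ d := by
      have h1 : finrank ℝ (Submodule.span ℝ (Set.range (fun a : A => D' a - ∫ a, D' a ∂μ')))
          ≤ finrank ℝ (V ⊓ (ℝ ∙ u)ᗮ : Submodule ℝ E) := Submodule.finrank_mono hspan_le
      have h2 : finrank ℝ (V ⊓ (ℝ ∙ u)ᗮ : Submodule ℝ E) < finrank ℝ V :=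
        Submodule.finrank_lt_finrank_of_lt hlt
      omega
    have hmem := ih μ' D' hD'_meas R (fun a => hbd a.val) hrank'
    rw [hb'] at hmem
    apply hb
    apply convexHull_mono (s := Set.range D') (Set.range_comp_subset_range Subtype.val D)
    exact hmem

end Barycenter



theorem exists_finite_rep {E : Type} [NormedAddCommGroup E] [NormedSpace ℝ E]
    [FiniteDimensional ℝ E] {α : Type} {D : α → E} {b : E}
    (hb : b ∈ convexHull ℝ (Set.range D)) :
    ∃ (k : ℕ), k ≤ finrank ℝ E + 1 ∧ ∃ (w : Fin k → ℝ) (x : Fin k → α),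
      (∀ i, 0 ≤ w i) ∧ (∑ i, w i) = 1 ∧ (∑ i, w i • D (x i)) = b := by
  obtain ⟨ι, hι, z, w, hzs, hai, hpos, hsum, hcomb⟩ := eq_pos_convex_span_of_mem_convexHull hb
  letI := hι
  have hcard : Fintype.card ι ≤ finrank ℝ E + 1 := by
    have h1 := hai.card_le_finrank_succ
    have h2 : finrank ℝ (vectorSpan ℝ (Set.range z)) ≤ finrank ℝ E := Submodule.finrank_le _
    omega
  set e : Fin (Fintype.card ι) ≃ ι := (Fintype.equivFin ι).symm with he
  have hx : ∀ i : Fin (Fintype.card ι), ∃ a : α, D a = z (e i) := fun i => hzs (Set.mem_range_self (e i))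
  choose x hxspec using hx
  refine ⟨Fintype.card ι, hcard, fun i => w (e i), x, fun i => (hpos (e i)).le, ?_, ?_⟩
  · rw [Equiv.sum_comp e w]
    exact hsum
  · calc (∑ i, w (e i) • D (x i)) = ∑ i, w (e i) • z (e i) := by
          congr 1; funext i; rw [hxspec i]
      _ = ∑ j, w j • z j := Equiv.sum_comp e (fun j => w j • z j)
      _ = b := hcomb

theorem card_graph_le (n : ℕ) :
    Fintype.card (SimpleGraph (Fin n)) ≤ 2 ^ (n * (n - 1) / 2) := by
  have hinj : Function.Injective
      (fun (G : SimpleGraph (Fin n)) (e : {e : Sym2 (Fin n) // ¬ e.IsDiag}) =>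
        (decide (e.1 ∈ G.edgeSet) : Bool)) := by
    intro G H h
    ext u v
    by_cases huv : u = v
    · subst huv; simp
    · have he : ¬ (s(u, v) : Sym2 (Fin n)).IsDiag := by
        rw [Sym2.mk_isDiag_iff]; exact huv
      have := congrFun h ⟨s(u, v), he⟩
      simp only [decide_eq_decide] at this
      simpa [SimpleGraph.mem_edgeSet] using this
  calc Fintype.card (SimpleGraph (Fin n))
      ≤ Fintype.card ({e : Sym2 (Fin n) // ¬ e.IsDiag} → Bool) :=
        Fintype.card_le_of_injective _ hinj
    _ = 2 ^ (n * (n - 1) / 2) := by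
        rw [Fintype.card_fun, Sym2.card_subtype_not_diag, Fintype.card_fin,
          Nat.choose_two_right, Fintype.card_bool]


namespace MColoringModel

variable {n : ℕ}

/-- the pi measurable space -/
abbrev piMS (M : MColoringModel n) : MeasurableSpace (∀ v, M.Ω v) :=
  @MeasurableSpace.pi _ _ M.meas

/-- the product measure -/
noncomputable def piM (M : MColoringModel n) : @Measure (∀ v, M.Ω v) M.piMS :=
  letI := M.meas
  Measure.pi M.μ

lemma dist_eq_piM (M : MColoringModel n) (G : SimpleGraph (Fin n)) :
    M.dist G = (M.piM {ω | M.graph ω = G}).toReal := rfl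

lemma measurableSet_adj (M : MColoringModel n) (u w : Fin n) :
    MeasurableSet[M.piMS] {ω : ∀ v, M.Ω v | (M.graph ω).Adj u w} := by
  letI := M.meas
  have hm : Measurable (fun ω : ∀ v, M.Ω v => M.f u w (ω u) (ω w)) :=
    (M.f_meas u w).comp ((measurable_pi_apply u).prodMk (measurable_pi_apply w))
  by_cases huw : u = w
  · subst huw
    have h : {ω : ∀ v, M.Ω v | (M.graph ω).Adj u u} = ∅ := by
      ext ω; simp [MColoringModel.graph]
    rw [h]; exact MeasurableSet.empty
  · have h : {ω : ∀ v, M.Ω v | (M.graph ω).Adj u w} =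
        (fun ω : ∀ v, M.Ω v => M.f u w (ω u) (ω w)) ⁻¹' {true} := by
      ext ω; simp [MColoringModel.graph, huw]
    rw [h]; exact hm (measurableSet_singleton true)

lemma measurableSet_graph_eq (M : MColoringModel n) (G : SimpleGraph (Fin n)) :
    MeasurableSet[M.piMS] {ω : ∀ v, M.Ω v | M.graph ω = G} := by
  letI := M.meas
  have h : {ω : ∀ v, M.Ω v | M.graph ω = G} =
      ⋂ (u) (w), {ω : ∀ v, M.Ω v | ((M.graph ω).Adj u w ↔ G.Adj u w)} := by
    ext ω
    simp only [Set.mem_setOf_eq, Set.mem_iInter]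
    constructor
    · rintro rfl u w; exact Iff.rfl
    · intro h
      ext u w
      exact h u w
  rw [h]
  refine MeasurableSet.iInter fun u => MeasurableSet.iInter fun w => ?_
  by_cases hG : G.Adj u w
  · have h2 : {ω : ∀ v, M.Ω v | ((M.graph ω).Adj u w ↔ G.Adj u w)} =
        {ω : ∀ v, M.Ω v | (M.graph ω).Adj u w} := by
      ext ω; simp [hG]
    rw [h2]; exact M.measurableSet_adj u w
  · have h2 : {ω : ∀ v, M.Ω v | ((M.graph ω).Adj u w ↔ G.Adj u w)} =
        {ω : ∀ v, M.Ω v | (M.graph ω).Adj u w}ᶜ := by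
      ext ω; simp [hG]
    rw [h2]; exact (M.measurableSet_adj u w).compl

/-- update the measure at one vertex -/
def upd (M : MColoringModel n) (v₀ : Fin n)
    (ρ : @MeasureTheory.Measure (M.Ω v₀) (M.meas v₀))
    (hρ : @MeasureTheory.IsProbabilityMeasure _ _ ρ) : MColoringModel n where
  Ω := M.Ω
  meas := M.meas
  μ := Function.update M.μ v₀ ρ
  prob := by
    intro v
    rcases eq_or_ne v v₀ with h | h
    · subst h; rw [Function.update_self]; exact hρ
    · rw [Function.update_of_ne h]; exact M.prob v
  f := M.f
  symm := M.symm
  f_meas := M.f_meas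

instance instUniqueEqSubtype (v₀ : Fin n) : Unique {u : Fin n // u = v₀} where
  default := ⟨v₀, rfl⟩
  uniq := by rintro ⟨x, rfl⟩; rfl

/-- rest measure -/
noncomputable def nu2 (M : MColoringModel n) (v₀ : Fin n) :
    @Measure (∀ u : {u : Fin n // ¬ u = v₀}, M.Ω u)
      (@MeasurableSpace.pi _ _ (fun u => M.meas u.1)) :=
  letI := M.meas
  Measure.pi (fun u : {u : Fin n // ¬ u = v₀} => M.μ u.1)

/-- recombination map -/
def Phi (M : MColoringModel n) (v₀ : Fin n) :
    M.Ω v₀ × (∀ u : {u : Fin n // ¬ u = v₀}, M.Ω u) → (∀ v, M.Ω v) :=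
  letI := M.meas
  fun q => (MeasurableEquiv.piEquivPiSubtypeProd M.Ω (fun i => i = v₀)).symm
    ((MeasurableEquiv.piUnique (fun i : {u : Fin n // u = v₀} => M.Ω i.1)).symm q.1, q.2)

lemma measurable_Phi (M : MColoringModel n) (v₀ : Fin n) :
    @Measurable _ _
      (@Prod.instMeasurableSpace _ _ (M.meas v₀) (@MeasurableSpace.pi _ _ (fun u : {u : Fin n // ¬ u = v₀} => M.meas u.1)))
      M.piMS (M.Phi v₀) := by
  letI := M.meas
  exact (MeasurableEquiv.piEquivPiSubtypeProd M.Ω (fun i => i = v₀)).symm.measurable.comp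
    (Measurable.prodMk
      ((MeasurableEquiv.piUnique (fun i : {u : Fin n // u = v₀} => M.Ω i.1)).symm.measurable.comp
        measurable_fst)
      measurable_snd)

lemma pi_upd_apply (M : MColoringModel n) (v₀ : Fin n)
    (ρ : @MeasureTheory.Measure (M.Ω v₀) (M.meas v₀))
    (hρ : @MeasureTheory.IsProbabilityMeasure _ _ ρ)
    {S : Set (∀ v, M.Ω v)} (hS : MeasurableSet[M.piMS] S) :
    (M.upd v₀ ρ hρ).piM S = ∫⁻ x, M.nu2 v₀ {ω' | M.Phi v₀ (x, ω') ∈ S} ∂ρ := by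
  letI := M.meas
  haveI := M.prob
  haveI := hρ
  haveI hup : ∀ v, IsProbabilityMeasure (Function.update M.μ v₀ ρ v) := (M.upd v₀ ρ hρ).prob
  haveI : ∀ i : {u : Fin n // ¬ u = v₀}, IsProbabilityMeasure (M.μ i.1) := fun i => M.prob i.1
  haveI : IsProbabilityMeasure (M.nu2 v₀) := by
    unfold nu2; infer_instance
  -- measure preserving chain
  have h1 := measurePreserving_piEquivPiSubtypeProd (Function.update M.μ v₀ ρ) (fun i => i = v₀)
  letI : Fintype {u : Fin n // u = v₀} := Subtype.fintype _
  have h2 := measurePreserving_piUnique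
    (fun i : {u : Fin n // u = v₀} => Function.update M.μ v₀ ρ i.1)
  rw [show Function.update M.μ v₀ ρ ((default : {u : Fin n // u = v₀}).1) = ρ from
    Function.update_self _ _ _] at h2
  have h2' := h2.symm (MeasurableEquiv.piUnique _)
  have h3 : Measure.pi (fun i : {u : Fin n // ¬ u = v₀} => Function.update M.μ v₀ ρ i.1)
      = M.nu2 v₀ := by
    unfold nu2
    congr 1
    funext i
    exact Function.update_of_ne i.2 _ _
  have h4 := h2'.prod (MeasurePreserving.id (M.nu2 v₀))
  rw [h3] at h1
  have h5 := h1.symm (MeasurableEquiv.piEquivPiSubtypeProd M.Ω (fun i => i = v₀))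
  have hΦ : MeasurePreserving (M.Phi v₀) (ρ.prod (M.nu2 v₀))
      (Measure.pi (Function.update M.μ v₀ ρ)) := h5.comp h4
  have hpre : (Measure.pi (Function.update M.μ v₀ ρ)) S = (ρ.prod (M.nu2 v₀)) ((M.Phi v₀) ⁻¹' S) :=
    (hΦ.measure_preimage hS.nullMeasurableSet).symm
  have hprd : (ρ.prod (M.nu2 v₀)) ((M.Phi v₀) ⁻¹' S) =
      ∫⁻ x, M.nu2 v₀ (Prod.mk x ⁻¹' ((M.Phi v₀) ⁻¹' S)) ∂ρ :=
    Measure.prod_apply (M.measurable_Phi v₀ hS)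
  show (Measure.pi (Function.update M.μ v₀ ρ)) S = _
  rw [hpre, hprd]
  rfl

noncomputable def sliceD (M : MColoringModel n) (v₀ : Fin n) (x : M.Ω v₀)
    (G : SimpleGraph (Fin n)) : ℝ :=
  (M.nu2 v₀ {ω' | M.Phi v₀ (x, ω') ∈ {ω | M.graph ω = G}}).toReal

lemma nu2_prob (M : MColoringModel n) (v₀ : Fin n) : IsProbabilityMeasure (M.nu2 v₀) := by
  haveI : ∀ i : {u : Fin n // ¬ u = v₀}, IsProbabilityMeasure (M.μ i.1) := fun i => M.prob i.1
  unfold nu2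
  infer_instance

lemma measurable_sliceD (M : MColoringModel n) (v₀ : Fin n) (G : SimpleGraph (Fin n)) :
    @Measurable _ _ (M.meas v₀) _ (fun x => M.sliceD v₀ x G) := by
  letI := M.meas
  haveI := M.nu2_prob v₀
  have hs : MeasurableSet ((M.Phi v₀) ⁻¹' {ω | M.graph ω = G}) :=
    M.measurable_Phi v₀ (M.measurableSet_graph_eq G)
  exact ENNReal.measurable_toReal.comp (measurable_measure_prodMk_left hs)

lemma sliceD_nonneg (M : MColoringModel n) (v₀ : Fin n) (x : M.Ω v₀) (G : SimpleGraph (Fin n)) :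
    0 ≤ M.sliceD v₀ x G := ENNReal.toReal_nonneg

lemma sliceD_le_one (M : MColoringModel n) (v₀ : Fin n) (x : M.Ω v₀) (G : SimpleGraph (Fin n)) :
    M.sliceD v₀ x G ≤ 1 := by
  haveI := M.nu2_prob v₀
  have h := prob_le_one (μ := M.nu2 v₀) (s := {ω' | M.Phi v₀ (x, ω') ∈ {ω | M.graph ω = G}})
  have := ENNReal.toReal_mono ENNReal.one_ne_top h
  rwa [ENNReal.toReal_one] at this

lemma dist_upd (M : MColoringModel n) (v₀ : Fin n)
    (ρ : @MeasureTheory.Measure (M.Ω v₀) (M.meas v₀))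
    (hρ : @MeasureTheory.IsProbabilityMeasure _ _ ρ) (G : SimpleGraph (Fin n)) :
    (M.upd v₀ ρ hρ).dist G = ∫ x, M.sliceD v₀ x G ∂ρ := by
  letI := M.meas
  haveI := hρ
  haveI := M.nu2_prob v₀
  have hs : MeasurableSet ((M.Phi v₀) ⁻¹' {ω | M.graph ω = G}) :=
    M.measurable_Phi v₀ (M.measurableSet_graph_eq G)
  calc (M.upd v₀ ρ hρ).dist G
      = ((M.upd v₀ ρ hρ).piM ({ω : ∀ v, M.Ω v | M.graph ω = G})).toReal := rfl
    _ = (∫⁻ x, M.nu2 v₀ (Prod.mk x ⁻¹' (M.Phi v₀ ⁻¹' {ω : ∀ v, M.Ω v | M.graph ω = G})) ∂ρ).toReal := by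
        exact congrArg ENNReal.toReal (pi_upd_apply M v₀ ρ hρ (M.measurableSet_graph_eq G))
    _ = ∫ x, (M.nu2 v₀ (Prod.mk x ⁻¹' (M.Phi v₀ ⁻¹' {ω : ∀ v, M.Ω v | M.graph ω = G}))).toReal ∂ρ := by
        rw [← integral_toReal ((measurable_measure_prodMk_left hs).aemeasurable)
          (ae_of_all _ (fun x => measure_lt_top (M.nu2 v₀) _))]
    _ = ∫ x, M.sliceD v₀ x G ∂ρ := rfl

lemma upd_self_piM (M : MColoringModel n) (v₀ : Fin n) :
    (M.upd v₀ (M.μ v₀) (M.prob v₀)).piM = M.piM := by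
  unfold piM upd
  congr 1
  exact Function.update_eq_self v₀ M.μ

lemma dist_eq_integral_sliceD (M : MColoringModel n) (v₀ : Fin n) (G : SimpleGraph (Fin n)) :
    M.dist G = ∫ x, M.sliceD v₀ x G ∂(M.μ v₀) := by
  have h1 : M.dist G
      = ((M.upd v₀ (M.μ v₀) (M.prob v₀)).piM ({ω : ∀ v, M.Ω v | M.graph ω = G})).toReal := by
    rw [dist_eq_piM, ← upd_self_piM M v₀]
    exact rfl
  have h2 : (M.upd v₀ (M.μ v₀) (M.prob v₀)).dist G
      = ((M.upd v₀ (M.μ v₀) (M.prob v₀)).piM ({ω : ∀ v, M.Ω v | M.graph ω = G})).toReal := rfl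
  rw [h1, ← h2, dist_upd]

end MColoringModel
namespace MColoringModel

lemma key_step {n : ℕ} (M : MColoringModel n) (v₀ : Fin n) :
    ∃ (ρ : @MeasureTheory.Measure (M.Ω v₀) (M.meas v₀))
      (hρ : @MeasureTheory.IsProbabilityMeasure _ _ ρ),
      (∃ k ≤ 2 ^ (n * (n - 1) / 2) + 1, ∃ (w : Fin k → ℝ) (x : Fin k → M.Ω v₀),
        (∀ i, 0 ≤ w i) ∧ (∑ i, w i) = 1 ∧
        ρ = ∑ i, ENNReal.ofReal (w i) • @MeasureTheory.Measure.dirac _ (M.meas v₀) (x i)) ∧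
      ∀ G, (M.upd v₀ ρ hρ).dist G = M.dist G := by
  letI := M.meas
  haveI := M.prob
  set D : M.Ω v₀ → EuclideanSpace ℝ (SimpleGraph (Fin n)) :=
    fun y => WithLp.toLp 2 (fun G => M.sliceD v₀ y G : SimpleGraph (Fin n) → ℝ) with hDdef
  have hDG : ∀ y G, D y G = M.sliceD v₀ y G := fun y G => rfl
  have hDmeas : Measurable D := by
    refine (WithLp.measurable_toLp 2 _).comp (measurable_pi_lambda _ ?_)
    intro G
    exact M.measurable_sliceD v₀ G
  have hDbd : ∀ y, ‖D y‖ ≤ Real.sqrt (Fintype.card (SimpleGraph (Fin n))) := by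
    intro y
    rw [EuclideanSpace.norm_eq]
    apply Real.sqrt_le_sqrt
    calc ∑ G, ‖D y G‖ ^ 2 ≤ ∑ _G : SimpleGraph (Fin n), (1:ℝ) := by
          apply Finset.sum_le_sum
          intro G _
          have h1 : ‖D y G‖ ≤ 1 := by
            rw [hDG, Real.norm_eq_abs, abs_of_nonneg (M.sliceD_nonneg v₀ y G)]
            exact M.sliceD_le_one v₀ y G
          calc ‖D y G‖ ^ 2 ≤ 1 ^ 2 := by
                apply pow_le_pow_left₀ (norm_nonneg _) h1
            _ = 1 := one_pow 2
      _ = Fintype.card (SimpleGraph (Fin n)) := by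
          simp [Finset.card_univ]
  have hbmem := aux_bary (finrank ℝ (EuclideanSpace ℝ (SimpleGraph (Fin n)))) (M.μ v₀) D
    hDmeas _ hDbd (Submodule.finrank_le _)
  obtain ⟨k, hk, w, x, hw0, hw1, hcomb⟩ := exists_finite_rep hbmem
  have hkB : k ≤ 2 ^ (n * (n - 1) / 2) + 1 := by
    have h1 : finrank ℝ (EuclideanSpace ℝ (SimpleGraph (Fin n)))
        = Fintype.card (SimpleGraph (Fin n)) := finrank_euclideanSpace
    have h2 := card_graph_le n
    omega
  set ρ : Measure (M.Ω v₀) := ∑ i, ENNReal.ofReal (w i) • Measure.dirac (x i) with hρdef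
  have hρ : IsProbabilityMeasure ρ := by
    constructor
    rw [hρdef, Measure.finset_sum_apply]
    simp only [Measure.smul_apply, smul_eq_mul, measure_univ, mul_one]
    rw [← ENNReal.ofReal_sum_of_nonneg (fun i _ => hw0 i), hw1, ENNReal.ofReal_one]
  refine ⟨ρ, hρ, ⟨k, hkB, w, x, hw0, hw1, rfl⟩, ?_⟩
  intro G
  rw [dist_upd, dist_eq_integral_sliceD M v₀ G]
  have hint_meas : StronglyMeasurable (fun y => M.sliceD v₀ y G) :=
    (M.measurable_sliceD v₀ G).stronglyMeasurable
  have hInt : ∀ i ∈ Finset.univ, Integrable (fun y => M.sliceD v₀ y G)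
      (ENNReal.ofReal (w i) • Measure.dirac (x i)) := by
    intro i _
    haveI : IsFiniteMeasure (ENNReal.ofReal (w i) • Measure.dirac (x i) :
        Measure (M.Ω v₀)) := by
      constructor
      rw [Measure.smul_apply, measure_univ, smul_eq_mul, mul_one]
      exact ENNReal.ofReal_lt_top
    refine ⟨hint_meas.aestronglyMeasurable, HasFiniteIntegral.of_bounded (C := 1)
      (ae_of_all _ (fun y => ?_))⟩
    rw [Real.norm_eq_abs, abs_of_nonneg (M.sliceD_nonneg v₀ y G)]
    exact M.sliceD_le_one v₀ y G
  rw [hρdef, integral_finset_sum_measure hInt]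
  have hterm : ∀ i : Fin k, ∫ y, M.sliceD v₀ y G ∂(ENNReal.ofReal (w i) • Measure.dirac (x i))
      = w i * M.sliceD v₀ (x i) G := by
    intro i
    rw [integral_smul_measure, integral_dirac' _ _ hint_meas,
      ENNReal.toReal_ofReal (hw0 i), smul_eq_mul]
  rw [Finset.sum_congr rfl (fun i _ => hterm i)]
  have hIntD : Integrable D (M.μ v₀) := integrable_of_bdd hDmeas hDbd
  calc ∑ i, w i * M.sliceD v₀ (x i) G
      = ∑ i, w i * (EuclideanSpace.proj (𝕜 := ℝ) G) (D (x i)) := rfl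
    _ = (EuclideanSpace.proj (𝕜 := ℝ) G) (∑ i, w i • D (x i)) := by
        rw [map_sum]
        exact Finset.sum_congr rfl fun i _ =>
          (map_smul (EuclideanSpace.proj (𝕜 := ℝ) G) (w i) (D (x i))).symm
    _ = (EuclideanSpace.proj (𝕜 := ℝ) G) (∫ y, D y ∂(M.μ v₀)) := by rw [hcomb]
    _ = ∫ y, (EuclideanSpace.proj (𝕜 := ℝ) G) (D y) ∂(M.μ v₀) :=
        (ContinuousLinearMap.integral_comp_comm _ hIntD).symm
    _ = ∫ y, M.sliceD v₀ y G ∂(M.μ v₀) := rfl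

end MColoringModel

namespace MColoringModel

lemma exists_all_finsupp {n : ℕ} (M : MColoringModel n) :
    ∃ M' : MColoringModel n, (∀ G, M'.dist G = M.dist G) ∧
      ∀ v, ∃ k ≤ 2 ^ (n * (n - 1) / 2) + 1, ∃ (w : Fin k → ℝ) (x : Fin k → M'.Ω v),
        (∀ i, 0 ≤ w i) ∧ (∑ i, w i) = 1 ∧
        M'.μ v = ∑ i, ENNReal.ofReal (w i) • @MeasureTheory.Measure.dirac _ (M'.meas v) (x i) := by
  suffices h : ∀ S : Finset (Fin n), ∃ M' : MColoringModel n, (∀ G, M'.dist G = M.dist G) ∧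
      ∀ v ∈ S, ∃ k ≤ 2 ^ (n * (n - 1) / 2) + 1, ∃ (w : Fin k → ℝ) (x : Fin k → M'.Ω v),
        (∀ i, 0 ≤ w i) ∧ (∑ i, w i) = 1 ∧
        M'.μ v = ∑ i, ENNReal.ofReal (w i) • @MeasureTheory.Measure.dirac _ (M'.meas v) (x i) by
    obtain ⟨M', h1, h2⟩ := h Finset.univ
    exact ⟨M', h1, fun v => h2 v (Finset.mem_univ v)⟩
  intro S
  induction S using Finset.induction_on with
  | empty => exact ⟨M, fun _ => rfl, by simp⟩
  | @insert v₀ S hv₀S ih =>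
    obtain ⟨M1, hd1, hfs1⟩ := ih
    obtain ⟨ρ, hρ, ⟨k, hkB, w, x, hw0, hw1, hρeq⟩, hdist⟩ := key_step M1 v₀
    refine ⟨M1.upd v₀ ρ hρ, fun G => (hdist G).trans (hd1 G), ?_⟩
    intro v hv
    rcases Finset.mem_insert.mp hv with h | h
    · subst h
      refine ⟨k, hkB, w, x, hw0, hw1, ?_⟩
      show Function.update M1.μ v ρ v = _
      rw [Function.update_self]
      exact hρeq
    · obtain ⟨k', hk', w', x', hw0', hw1', heq'⟩ := hfs1 v h
      refine ⟨k', hk', w', x', hw0', hw1', ?_⟩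
      show Function.update M1.μ v₀ ρ v = _
      rw [Function.update_of_ne (by rintro rfl; exact hv₀S h)]
      exact heq'

end MColoringModel


theorem finitely_many_colors_suffice (n : ℕ) (M : MColoringModel n) :
    ∃ M' : ColoringModel n,
      (∀ v, Nat.card (M'.Ω v) ≤ 2 ^ (n * (n - 1) / 2) + 1) ∧
      ∀ G : SimpleGraph (Fin n), M'.dist G = M.dist G := by

  obtain ⟨M1, hd1, hfs⟩ := MColoringModel.exists_all_finsupp M
  choose k hkB w x hw0 hw1 hμeq using hfs
  letI := M1.meas
  haveI := M1.prob
  set M' : ColoringModel n :=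
    { Ω := fun v => Fin (k v)
      fin := fun v => inferInstance
      p := fun v i => w v i
      nonneg := fun v i => hw0 v i
      sum_one := fun v => hw1 v
      f := fun u v i j => M1.f u v (x u i) (x v j)
      symm := fun u v i j => M1.symm u v (x u i) (x v j) } with hM'def
  refine ⟨M', ?_, ?_⟩
  · intro v
    show Nat.card (Fin (k v)) ≤ _
    rw [Nat.card_eq_fintype_card, Fintype.card_fin]
    exact hkB v
  · intro G
    rw [← hd1 G]
    set T : (∀ v, Fin (k v)) → (∀ v, M1.Ω v) := fun c v => x v (c v) with hTdef
    have hgr : ∀ c, M'.graph c = M1.graph (T c) := fun c => rfl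
    -- the product measure is a combination of Dirac measures
    have hpi : M1.piM = ∑ c : (∀ v, Fin (k v)),
        (∏ v, ENNReal.ofReal (w v (c v))) • @MeasureTheory.Measure.dirac _ M1.piMS (T c) := by
      refine MeasureTheory.Measure.pi_eq ?_
      intro s hs
      rw [MeasureTheory.Measure.finset_sum_apply]
      have hc : ∀ c : (∀ v, Fin (k v)),
          ((∏ v, ENNReal.ofReal (w v (c v))) • @MeasureTheory.Measure.dirac _ M1.piMS (T c))
            (Set.pi Set.univ s)
          = ∏ v, (ENNReal.ofReal (w v (c v)) * Set.indicator (s v) 1 (x v (c v))) := by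
        intro c
        rw [MeasureTheory.Measure.smul_apply,
          MeasureTheory.Measure.dirac_apply' _ (MeasurableSet.univ_pi hs), smul_eq_mul]
        have hind : (Set.pi Set.univ s).indicator (1 : (∀ v, M1.Ω v) → ENNReal) (T c)
            = ∏ v, Set.indicator (s v) 1 (x v (c v)) := by
          by_cases h : T c ∈ Set.pi Set.univ s
          · rw [Set.indicator_of_mem h]
            rw [Set.mem_univ_pi] at h
            symm
            apply Finset.prod_eq_one
            intro v _
            rw [Set.indicator_of_mem (h v)]
            rfl
          · rw [Set.indicator_of_notMem h]
            rw [Set.mem_univ_pi] at h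
            push_neg at h
            obtain ⟨v, hv⟩ := h
            symm
            apply Finset.prod_eq_zero (Finset.mem_univ v)
            rw [Set.indicator_of_notMem hv]
        rw [hind, Finset.prod_mul_distrib]
      calc ∑ c : (∀ v, Fin (k v)),
            ((∏ v, ENNReal.ofReal (w v (c v))) • @MeasureTheory.Measure.dirac _ M1.piMS (T c))
              (Set.pi Set.univ s)
          = ∑ c : (∀ v, Fin (k v)),
              ∏ v, (ENNReal.ofReal (w v (c v)) * Set.indicator (s v) 1 (x v (c v))) :=
            Finset.sum_congr rfl (fun c _ => hc c)
        _ = ∏ v, ∑ i, (ENNReal.ofReal (w v i) * Set.indicator (s v) 1 (x v i)) := by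
            rw [Finset.prod_univ_sum, Fintype.piFinset_univ]
        _ = ∏ v, M1.μ v (s v) := by
            apply Finset.prod_congr rfl
            intro v _
            rw [hμeq v, MeasureTheory.Measure.finset_sum_apply]
            apply Finset.sum_congr rfl
            intro i _
            rw [MeasureTheory.Measure.smul_apply,
              MeasureTheory.Measure.dirac_apply' _ (hs v), smul_eq_mul]
    have hSG := M1.measurableSet_graph_eq G
    have happly : M1.piM {ω | M1.graph ω = G}
        = ∑ c : (∀ v, Fin (k v)), (∏ v, ENNReal.ofReal (w v (c v)))
            * Set.indicator {ω | M1.graph ω = G} 1 (T c) := by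
      rw [hpi, MeasureTheory.Measure.finset_sum_apply]
      exact Finset.sum_congr rfl fun c _ => by
        rw [MeasureTheory.Measure.smul_apply, MeasureTheory.Measure.dirac_apply' _ hSG,
          smul_eq_mul]
    have hM1dist : M1.dist G
        = ∑ c : (∀ v, Fin (k v)), if M1.graph (T c) = G then ∏ v, w v (c v) else 0 := by
      rw [MColoringModel.dist_eq_piM, happly, ENNReal.toReal_sum ?fin]
      case fin =>
        intro c _
        apply ENNReal.mul_ne_top
        · exact (ENNReal.prod_lt_top (fun v _ => ENNReal.ofReal_lt_top)).ne
        · by_cases h : T c ∈ {ω | M1.graph ω = G}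
          · rw [Set.indicator_of_mem h]; exact ENNReal.one_ne_top
          · rw [Set.indicator_of_notMem h]; exact ENNReal.zero_ne_top
      refine Finset.sum_congr rfl fun c _ => ?_
      by_cases h : M1.graph (T c) = G
      · rw [Set.indicator_of_mem (show T c ∈ {ω | M1.graph ω = G} from h), Pi.one_apply,
          mul_one, if_pos h, ENNReal.toReal_prod]
        exact Finset.prod_congr rfl fun v _ => ENNReal.toReal_ofReal (hw0 v _)
      · rw [Set.indicator_of_notMem (show T c ∉ {ω | M1.graph ω = G} from h), mul_zero,
          if_neg h, ENNReal.toReal_zero]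
    have hM'dist : M'.dist G
        = ∑ c : (∀ v, Fin (k v)), if M1.graph (T c) = G then ∏ v, w v (c v) else 0 := by
      show (∑ c : (∀ v, Fin (k v)), if M'.graph c = G then ∏ v, w v (c v) else 0) = _
      exact Finset.sum_congr rfl fun c _ => by rw [hgr]
    rw [hM'dist, hM1dist]
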